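/- Let n ≥ 3 be odd and let Q_{4n} be the generalized quaternion group of order 4n. Then every proper normal subgroup of Q_{4n} is contained in the cyclic subgroup ⟨a⟩, and Q_{4n} is X-decomposable, where X = {(d+1)/2 : d | n, d odd} ∪ {(d+2)/2 : d | 2n, d even}. -/

import Mathlib

/-- `ncc A` is the number of conjugacy classes of `G` contained in the subgroup `A`. -/
noncomputable def ncc {G : Type*} [Group G] (A : Subgroup G) : ℕ :=
  Nat.card {c : ConjClasses G // c.carrier ⊆ (A : Set G)}

/-- `KG G` is the set of values `ncc A` for `A` a proper normal subgroup of `G`. -/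
def KG (G : Type*) [Group G] : Set ℕ :=
  {n | ∃ A : Subgroup G, A.Normal ∧ A ≠ ⊤ ∧ ncc A = n}

/-- `G` is `X`-decomposable if `KG G = X`. -/
def XDecomposable (G : Type*) [Group G] (X : Set ℕ) : Prop := KG G = X

namespace QuatAux

open QuaternionGroup Subgroup

variable {n : ℕ} [NeZero n]

lemma a_inv (j : ZMod (2 * n)) : (a j : QuaternionGroup n)⁻¹ = a (-j) := rfl

lemma xa_inv (j : ZMod (2 * n)) : (xa j : QuaternionGroup n)⁻¹ = xa ((n : ZMod (2 * n)) + j) := rfl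

lemma two_n_zero : ((n : ZMod (2 * n)) + n) = 0 := by
  have h : ((2 * n : ℕ) : ZMod (2 * n)) = 0 := ZMod.natCast_self _
  push_cast at h
  linear_combination h

lemma a_one_zpow (m : ℤ) : (a 1 : QuaternionGroup n) ^ m = a (m : ZMod (2 * n)) := by
  induction m using Int.induction_on with
  | zero => simp
  | succ k ih =>
      rw [zpow_add, zpow_one, ih, a_mul_a]
      congr 1
      push_cast
      ring
  | pred k ih =>
      rw [zpow_sub, zpow_one, ih]
      show _ * (a 1)⁻¹ = _
      rw [a_inv, a_mul_a]
      congr 1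
      push_cast
      ring

lemma a_mem_zpowers (i : ZMod (2 * n)) : a i ∈ zpowers (a 1 : QuaternionGroup n) :=
  ⟨(i.val : ℤ), by
    show (a 1 : QuaternionGroup n) ^ ((i.val : ℕ) : ℤ) = a i
    rw [a_one_zpow]; congr 1; push_cast; simp [ZMod.natCast_zmod_val]⟩

lemma eq_a_of_mem_zpowers {g : QuaternionGroup n} (hg : g ∈ zpowers (a 1 : QuaternionGroup n)) :
    ∃ k, g = a k := by
  obtain ⟨m, rfl⟩ := hg
  exact ⟨_, a_one_zpow m⟩

lemma xa_not_mem_zpowers (i : ZMod (2 * n)) : xa i ∉ zpowers (a 1 : QuaternionGroup n) := by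
  intro h
  obtain ⟨k, hk⟩ := eq_a_of_mem_zpowers h
  cases hk

lemma add_self_eq_zero_iff {k : ZMod (2 * n)} (h : k + k = 0) :
    k = 0 ∨ k = (n : ZMod (2 * n)) := by
  have hlt : k.val < 2 * n := ZMod.val_lt k
  have h2 : ((k.val + k.val : ℕ) : ZMod (2 * n)) = 0 := by
    push_cast
    rw [ZMod.natCast_zmod_val]
    exact h
  have hdvd : (2 * n) ∣ (k.val + k.val) := (ZMod.natCast_eq_zero_iff _ _).mp h2
  obtain ⟨c, hc⟩ := hdvd
  have hn0 : 0 < n := Nat.pos_of_ne_zero (NeZero.ne n)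
  have : k.val = 0 ∨ k.val = n := by
    rcases Nat.lt_or_ge c 2 with hc2 | hc2
    · interval_cases c <;> omega
    · nlinarith
  rcases this with h0 | hvn
  · left
    rw [← ZMod.natCast_zmod_val k, h0, Nat.cast_zero]
  · right
    rw [← ZMod.natCast_zmod_val k, hvn]

/-- The conjugacy class of `a k`. -/
lemma carrier_mk_a (k : ZMod (2 * n)) :
    (ConjClasses.mk (a k : QuaternionGroup n)).carrier = {a k, a (-k)} := by
  ext g
  rw [ConjClasses.mem_carrier_iff_mk_eq, ConjClasses.mk_eq_mk_iff_isConj, isConj_iff]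
  constructor
  · rintro ⟨c, hc⟩
    rcases c with j | j <;> rcases g with l | l <;>
      simp only [a_inv, xa_inv, a_mul_a, a_mul_xa, xa_mul_a, xa_mul_xa] at hc
    · have h' : j + l + -j = k := by injection hc
      left
      congr 1
      linear_combination h'
    · exact absurd hc (by simp)
    · have h' : (n : ZMod (2 * n)) + ((n : ZMod (2 * n)) + j) - (j + l) = k := by injection hc
      right
      congr 1
      have h2 := @two_n_zero n _
      linear_combination - h' + h2
    · exact absurd hc (by simp)
  · rintro (rfl | rfl)
    · exact ⟨1, by group⟩
    · refine ⟨xa 0, ?_⟩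
      rw [xa_inv, xa_mul_a, xa_mul_xa]
      congr 1
      have h2 := @two_n_zero n _
      linear_combination h2

lemma eq_top_of_xa_mem (hodd : Odd n) {H : Subgroup (QuaternionGroup n)} (hN : H.Normal)
    {i : ZMod (2 * n)} (hi : xa i ∈ H) : H = ⊤ := by
  -- conjugate by a 1 to get xa (i - 2)
  have h1 : xa (i - 2) ∈ H := by
    have h := hN.conj_mem _ hi (a 1)
    rw [a_mul_xa, a_inv, xa_mul_a] at h
    convert h using 2
    ring
  -- (xa i) * (xa i) = a n
  have h2 : a (n : ZMod (2 * n)) ∈ H := by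
    have h := H.mul_mem hi hi
    rw [xa_mul_xa] at h
    convert h using 2
    ring
  -- xa i * (xa (i - 2))⁻¹ = a (-2), so a 2 ∈ H
  have h3 : a (2 : ZMod (2 * n)) ∈ H := by
    have h := H.mul_mem h1 (H.inv_mem hi)
    rw [xa_inv, xa_mul_xa] at h
    convert h using 2
    have hz := @two_n_zero n _
    linear_combination - hz
  -- a 1 ∈ H
  have h4 : a (1 : ZMod (2 * n)) ∈ H := by
    obtain ⟨m, hm⟩ := hodd
    have e2 : (a 1 : QuaternionGroup n) ^ (2 : ℤ) ∈ H := by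
      rw [a_one_zpow]; exact_mod_cast h3
    have en : (a 1 : QuaternionGroup n) ^ (n : ℤ) ∈ H := by
      rw [a_one_zpow]; exact_mod_cast h2
    have h5 : (a 1 : QuaternionGroup n) ^ ((n : ℤ) - 2 * m) ∈ H := by
      rw [sub_eq_add_neg, zpow_add, zpow_neg, zpow_mul]
      exact H.mul_mem en (H.inv_mem (H.zpow_mem e2 m))
    have h6 : ((n : ℤ) - 2 * m) = 1 := by rw [hm]; push_cast; ring
    rw [h6, zpow_one] at h5
    exact h5
  -- now everything is in H
  rw [eq_top_iff]
  rintro (l | l) -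
  · have : (a 1 : QuaternionGroup n) ^ (l.val : ℤ) ∈ H := H.zpow_mem h4 _
    rw [a_one_zpow] at this
    convert this using 2
    push_cast
    simp [ZMod.natCast_zmod_val]
  · have ha : a (i - l) ∈ H := by
      have : (a 1 : QuaternionGroup n) ^ ((i - l).val : ℤ) ∈ H := H.zpow_mem h4 _
      rw [a_one_zpow] at this
      convert this using 2
      push_cast
      simp [ZMod.natCast_zmod_val]
    have h := H.mul_mem ha hi
    rw [a_mul_xa] at h
    convert h using 2
    ring

lemma normal_of_le {H : Subgroup (QuaternionGroup n)} (hH : H ≤ zpowers (a 1)) : H.Normal := by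
  constructor
  intro g hg c
  obtain ⟨k, rfl⟩ := eq_a_of_mem_zpowers (hH hg)
  rcases c with j | j
  · rw [a_mul_a, a_inv, a_mul_a]
    convert hg using 2
    ring
  · rw [xa_mul_a, xa_inv, xa_mul_xa]
    have h' := H.inv_mem hg
    rw [a_inv] at h'
    convert h' using 2
    have hz := @two_n_zero n _
    linear_combination hz

lemma ne_top_of_le {H : Subgroup (QuaternionGroup n)} (hH : H ≤ zpowers (a 1)) : H ≠ ⊤ := by
  intro h
  exact xa_not_mem_zpowers 0 (hH (h ▸ Subgroup.mem_top (xa 0)))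

lemma an_mem_iff_even_card (hodd : Odd n) {H : Subgroup (QuaternionGroup n)}
    (hH : H ≤ zpowers (a 1)) :
    (a (n : ZMod (2 * n)) ∈ H) ↔ Even (Nat.card H) := by
  constructor
  · intro hmem
    have ho : orderOf (a (n : ZMod (2 * n)) : QuaternionGroup n) = 2 := by
      rw [orderOf_a]
      have hv : ((n : ZMod (2 * n))).val = n := by
        have hpos : 0 < n := Nat.pos_of_ne_zero (NeZero.ne n)
        rw [ZMod.val_natCast, Nat.mod_eq_of_lt]
        omega
      rw [hv, Nat.gcd_eq_right ⟨2, by ring⟩]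
      have hpos : 0 < n := Nat.pos_of_ne_zero (NeZero.ne n)
      rw [mul_comm 2 n, Nat.mul_div_cancel_left 2 hpos]
    have := Subgroup.orderOf_dvd_natCard H hmem
    rw [ho] at this
    exact (even_iff_two_dvd).mpr this
  · intro heven
    haveI : Fintype H := Fintype.ofFinite H
    haveI : Fact (Nat.Prime 2) := Fact.mk Nat.prime_two
    have hcard : 2 ∣ Fintype.card H := by
      rw [← Nat.card_eq_fintype_card]
      exact even_iff_two_dvd.mp heven
    obtain ⟨g, hg⟩ := exists_prime_orderOf_dvd_card (G := H) 2 hcard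
    have hgo : orderOf (g : QuaternionGroup n) = 2 := by
      rw [Subgroup.orderOf_coe, hg]
    obtain ⟨k, hk⟩ := eq_a_of_mem_zpowers (hH g.2)
    have hg2 : (g : QuaternionGroup n) ^ 2 = 1 := by
      rw [← hgo]; exact pow_orderOf_eq_one _
    rw [hk] at hg2
    have hkk : k + k = 0 := by
      have : (a (k + k) : QuaternionGroup n) = a 0 := by
        rw [← a_mul_a]
        rw [show (a k : QuaternionGroup n) * a k = a k ^ 2 from (sq _).symm, hg2, one_def]
      injection this
    rcases add_self_eq_zero_iff hkk with h0 | hn'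
    · exfalso
      have hone : (g : QuaternionGroup n) = 1 := by rw [hk, h0, one_def]
      have h1' : orderOf (g : QuaternionGroup n) = 1 := by rw [hone, orderOf_one]
      omega
    · have hm' : (g : QuaternionGroup n) ∈ H := g.2
      rwa [hk, hn'] at hm'


lemma ncc_eq {H : Subgroup (QuaternionGroup n)} (hH : H ≤ zpowers (a 1)) :
    ncc H = Nat.card H / 2 + 1 := by
  classical
  have hpos : 0 < n := Nat.pos_of_ne_zero (NeZero.ne n)
  set K : Finset (ZMod (2 * n)) := Finset.univ.filter (fun k => a k ∈ H) with hK
  have hmemK : ∀ k : ZMod (2 * n), k ∈ K ↔ a k ∈ H := by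
    intro k; simp [hK]
  set T : Finset (ZMod (2 * n)) := K.filter (fun k => k.val ≤ n) with hT
  set T' : Finset (ZMod (2 * n)) := T.filter (fun k => k ≠ 0 ∧ k.val ≠ n) with hT'
  have hvn : ((n : ZMod (2 * n))).val = n := by
    rw [ZMod.val_natCast, Nat.mod_eq_of_lt (by omega)]
  -- K.card = Nat.card H
  have hcardK : K.card = Nat.card H := by
    have e : {k // k ∈ K} ≃ H := by
      refine Equiv.ofBijective (fun k => ⟨a k.1, (hmemK k.1).mp k.2⟩) ⟨?_, ?_⟩
      · intro k k' h
        exact Subtype.ext (a.inj (congrArg Subtype.val h))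
      · rintro ⟨g, hg⟩
        obtain ⟨k, rfl⟩ := eq_a_of_mem_zpowers (hH hg)
        exact ⟨⟨k, (hmemK k).mpr hg⟩, rfl⟩
    rw [← Fintype.card_coe K, ← Nat.card_eq_fintype_card, Nat.card_congr e]
  -- ncc H = T.card
  have hnccT : ncc H = T.card := by
    have hsub : ∀ k : ZMod (2 * n), k ∈ K →
        (ConjClasses.mk (a k : QuaternionGroup n)).carrier ⊆ (H : Set (QuaternionGroup n)) := by
      intro k hk
      rw [carrier_mk_a]
      rintro g hg
      simp only [Set.mem_insert_iff, Set.mem_singleton_iff] at hg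
      rcases hg with rfl | rfl
      · exact (hmemK k).mp hk
      · have := H.inv_mem ((hmemK k).mp hk)
        rwa [a_inv] at this
    set F : {k : ZMod (2 * n) // k ∈ T} → {c : ConjClasses (QuaternionGroup n) //
        c.carrier ⊆ (H : Set (QuaternionGroup n))} :=
      fun k => ⟨ConjClasses.mk (a k.1), hsub k.1 (Finset.mem_filter.mp k.2).1⟩ with hF
    have hbij : Function.Bijective F := by
      constructor
      · rintro ⟨k, hk⟩ ⟨k', hk'⟩ h
        have hmk : ConjClasses.mk (a k : QuaternionGroup n) = ConjClasses.mk (a k') :=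
          congrArg Subtype.val h
        have hmem : (a k' : QuaternionGroup n) ∈ (ConjClasses.mk (a k :
            QuaternionGroup n)).carrier := by
          rw [hmk]; exact ConjClasses.mem_carrier_mk
        rw [carrier_mk_a] at hmem
        simp only [Set.mem_insert_iff, Set.mem_singleton_iff] at hmem
        have hv : k.val ≤ n := (Finset.mem_filter.mp hk).2
        have hv' : k'.val ≤ n := (Finset.mem_filter.mp hk').2
        rcases hmem with he | he
        · exact Subtype.ext (a.inj he).symm
        · have hkk : k' = -k := a.inj he
          by_cases h0 : k = 0
          · apply Subtype.ext
            show k = k'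
            rw [hkk, h0, neg_zero]
          · have hnv : (-k).val = 2 * n - k.val := by
              rw [ZMod.neg_val, if_neg h0]
            have hklt : k.val < 2 * n := ZMod.val_lt k
            have hk0 : k.val ≠ 0 := fun hc => h0 (by
              rw [← ZMod.natCast_zmod_val k, hc, Nat.cast_zero])
            have : k'.val = 2 * n - k.val := by rw [hkk, hnv]
            have hkn : k.val = n := by omega
            have hkn' : k'.val = n := by omega
            apply Subtype.ext
            show k = k'
            rw [← ZMod.natCast_zmod_val k, ← ZMod.natCast_zmod_val k', hkn, hkn']
      · rintro ⟨c, hc⟩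
        obtain ⟨g, rfl⟩ := ConjClasses.mk_surjective c
        have hgH : g ∈ H := hc ConjClasses.mem_carrier_mk
        obtain ⟨k, rfl⟩ := eq_a_of_mem_zpowers (hH hgH)
        have hkK : k ∈ K := (hmemK k).mpr hgH
        by_cases hv : k.val ≤ n
        · exact ⟨⟨k, Finset.mem_filter.mpr ⟨hkK, hv⟩⟩, rfl⟩
        · have h0 : k ≠ 0 := fun hc => hv (by rw [hc]; simp [ZMod.val_zero])
          have hnv : (-k).val = 2 * n - k.val := by rw [ZMod.neg_val, if_neg h0]
          have hklt : k.val < 2 * n := ZMod.val_lt k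
          have hnegK : -k ∈ K := by
            rw [hmemK]
            have := H.inv_mem hgH
            rwa [a_inv] at this
          refine ⟨⟨-k, Finset.mem_filter.mpr ⟨hnegK, by omega⟩⟩, ?_⟩
          apply Subtype.ext
          show ConjClasses.mk (a (-k) : QuaternionGroup n) = ConjClasses.mk (a k)
          symm
          rw [← ConjClasses.mem_carrier_iff_mk_eq, carrier_mk_a]
          simp
    have h1 : ncc H = Nat.card {k : ZMod (2 * n) // k ∈ T} :=
      (Nat.card_eq_of_bijective F hbij).symm
    rw [h1, Nat.card_eq_fintype_card, Fintype.card_coe]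
  -- U and T'
  have hTU : T.card + (K.filter (fun k => ¬ k.val ≤ n)).card = K.card := by
    rw [hT]
    exact Finset.card_filter_add_card_filter_not _
  have hU : (K.filter (fun k => ¬ k.val ≤ n)).card = T'.card := by
    apply Finset.card_nbij (i := fun k => -k)
    · intro k hk
      beta_reduce
      obtain ⟨hkK, hkv⟩ := Finset.mem_filter.mp hk
      have hkK' := (Finset.mem_filter.mp hkK).1
      have h0 : k ≠ 0 := fun hc => hkv (by rw [hc]; simp [ZMod.val_zero])
      have hnv : (-k).val = 2 * n - k.val := by rw [ZMod.neg_val, if_neg h0]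
      have hklt : k.val < 2 * n := ZMod.val_lt k
      have hnegK : -k ∈ K := by
        rw [hmemK]
        have := H.inv_mem ((hmemK k).mp hkK)
        rwa [a_inv] at this
      refine Finset.mem_filter.mpr ⟨Finset.mem_filter.mpr ⟨hnegK, by omega⟩, ?_, by omega⟩
      intro hc
      have : (-k).val = 0 := by rw [hc]; exact ZMod.val_zero
      omega
    · intro x hx y hy h
      exact neg_injective h
    · intro k hk
      obtain ⟨hkT, h0, hvn'⟩ := Finset.mem_filter.mp hk
      obtain ⟨hkK, hkv⟩ := Finset.mem_filter.mp hkT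
      have hk0 : k.val ≠ 0 := fun hc => h0 (by
        rw [← ZMod.natCast_zmod_val k, hc, Nat.cast_zero])
      have hnv : (-k).val = 2 * n - k.val := by rw [ZMod.neg_val, if_neg h0]
      have hklt : k.val < 2 * n := ZMod.val_lt k
      have hnegK : -k ∈ K := by
        rw [hmemK]
        have := H.inv_mem ((hmemK k).mp hkK)
        rwa [a_inv] at this
      refine ⟨-k, Finset.mem_filter.mpr ⟨hnegK, by omega⟩, by simp⟩
  -- T.card = T'.card + s
  have h0T : (0 : ZMod (2 * n)) ∈ T := by
    refine Finset.mem_filter.mpr ⟨(hmemK 0).mpr (by rw [← one_def]; exact H.one_mem), ?_⟩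
    simp [ZMod.val_zero]
  by_cases hnK : (n : ZMod (2 * n)) ∈ K
  · have hfilt : T.filter (fun k => ¬ (k ≠ 0 ∧ k.val ≠ n)) = {0, (n : ZMod (2 * n))} := by
      ext k
      simp only [Finset.mem_filter, Finset.mem_insert, Finset.mem_singleton]
      constructor
      · rintro ⟨hkT, hco⟩
        by_cases h0 : k = 0
        · exact Or.inl h0
        · right
          have hvn' : k.val = n := by tauto
          rw [← ZMod.natCast_zmod_val k, hvn']
      · rintro (rfl | rfl)
        · exact ⟨h0T, by simp⟩
        · refine ⟨Finset.mem_filter.mpr ⟨hnK, by omega⟩, ?_⟩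
          simp [hvn]
    have hsT : T'.card + 2 = T.card := by
      have := Finset.card_filter_add_card_filter_not
        (s := T) (p := fun k => k ≠ 0 ∧ k.val ≠ n)
      rw [hfilt] at this
      rw [← this, ← hT']
      congr 1
      rw [Finset.card_insert_of_notMem, Finset.card_singleton]
      simp only [Finset.mem_singleton]
      intro hc
      have : ((n : ZMod (2 * n))).val = 0 := by rw [← hc]; exact ZMod.val_zero
      omega
    rw [hnccT, ← hcardK]
    omega
  · have hfilt : T.filter (fun k => ¬ (k ≠ 0 ∧ k.val ≠ n)) = {0} := by
      ext k
      simp only [Finset.mem_filter, Finset.mem_singleton]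
      constructor
      · rintro ⟨hkT, hco⟩
        by_cases h0 : k = 0
        · exact h0
        · exfalso
          have hvn' : k.val = n := by tauto
          have : k = (n : ZMod (2 * n)) := by rw [← ZMod.natCast_zmod_val k, hvn']
          exact hnK (this ▸ (Finset.mem_filter.mp hkT).1)
      · rintro rfl
        exact ⟨h0T, by simp⟩
    have hsT : T'.card + 1 = T.card := by
      have := Finset.card_filter_add_card_filter_not
        (s := T) (p := fun k => k ≠ 0 ∧ k.val ≠ n)
      rw [hfilt, Finset.card_singleton] at this
      rw [← this, ← hT']
    rw [hnccT, ← hcardK]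
    omega

lemma exists_subgroup (d : ℕ) (hd : d ∣ 2 * n) (hd0 : d ≠ 0) :
    ∃ H : Subgroup (QuaternionGroup n), H ≤ zpowers (a 1) ∧ Nat.card H = d := by
  refine ⟨zpowers ((a 1 : QuaternionGroup n) ^ (2 * n / d)), ?_, ?_⟩
  · exact Subgroup.zpowers_le.mpr (Subgroup.pow_mem _ (Subgroup.mem_zpowers _) _)
  · rw [Nat.card_zpowers, orderOf_pow, orderOf_a_one,
      Nat.gcd_eq_right (Nat.div_dvd_of_dvd hd),
      Nat.div_div_self hd (Nat.mul_ne_zero two_ne_zero (NeZero.ne n))]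

end QuatAux

open QuaternionGroup in
/-- For odd `n ≥ 3`, every proper normal subgroup of `Q_{4n}` is contained in `⟨a⟩`, and
`Q_{4n}` is `X`-decomposable for
`X = {(d+1)/2 : d ∣ n, d odd} ∪ {(d+2)/2 : d ∣ 2n, d even}`. -/
theorem quaternion_odd_decomposable (n : ℕ) (hn : 3 ≤ n) (hodd : Odd n) :
    (∀ H : Subgroup (QuaternionGroup n), H.Normal → H ≠ ⊤ →
      H ≤ Subgroup.zpowers (a (1 : ZMod (2 * n)))) ∧
    XDecomposable (QuaternionGroup n)
      ({m : ℕ | ∃ d : ℕ, d ∣ n ∧ Odd d ∧ m = (d + 1) / 2} ∪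
       {m : ℕ | ∃ d : ℕ, d ∣ 2 * n ∧ Even d ∧ m = (d + 2) / 2}) := by
  haveI : NeZero n := ⟨by omega⟩
  have hA : ∀ H : Subgroup (QuaternionGroup n), H.Normal → H ≠ ⊤ →
      H ≤ Subgroup.zpowers (a (1 : ZMod (2 * n))) := by
    intro H hN hT g hg
    rcases g with k | k
    · exact QuatAux.a_mem_zpowers k
    · exact absurd (QuatAux.eq_top_of_xa_mem hodd hN hg) hT
  refine ⟨hA, ?_⟩
  unfold XDecomposable
  ext m
  simp only [KG, Set.mem_setOf_eq, Set.mem_union]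
  constructor
  · rintro ⟨H, hN, hT, rfl⟩
    have hle := hA H hN hT
    have hdvd : Nat.card H ∣ 2 * n := by
      have := Subgroup.card_dvd_of_le hle
      rwa [Nat.card_zpowers, orderOf_a_one] at this
    have hncc := QuatAux.ncc_eq hle
    rcases Nat.even_or_odd (Nat.card H) with he | ho
    · right
      refine ⟨Nat.card H, hdvd, he, ?_⟩
      obtain ⟨t, ht⟩ := he
      omega
    · left
      refine ⟨Nat.card H, ?_, ho, ?_⟩
      · have hcop : Nat.Coprime (Nat.card H) 2 := by
          exact Nat.coprime_two_right.mpr ho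
        exact hcop.dvd_of_dvd_mul_left hdvd
      · obtain ⟨t, ht⟩ := ho
        omega
  · rintro (⟨d, hd, hdodd, rfl⟩ | ⟨d, hd, hdeven, rfl⟩)
    · have hd2 : d ∣ 2 * n := hd.mul_left 2
      have hd0 : d ≠ 0 := by
        intro hc
        rw [hc] at hd
        have := Nat.eq_zero_of_zero_dvd hd
        omega
      obtain ⟨H, hle, hcard⟩ := QuatAux.exists_subgroup d hd2 hd0
      refine ⟨H, QuatAux.normal_of_le hle, QuatAux.ne_top_of_le hle, ?_⟩
      rw [QuatAux.ncc_eq hle, hcard]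
      obtain ⟨t, ht⟩ := hdodd
      omega
    · have hd0 : d ≠ 0 := by
        intro hc
        rw [hc] at hd
        have := Nat.eq_zero_of_zero_dvd hd
        omega
      obtain ⟨H, hle, hcard⟩ := QuatAux.exists_subgroup d hd hd0
      refine ⟨H, QuatAux.normal_of_le hle, QuatAux.ne_top_of_le hle, ?_⟩
      rw [QuatAux.ncc_eq hle, hcard]
      obtain ⟨t, ht⟩ := hdeven
      omega
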